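/- Let B, A, A₀ be categories with B essentially small, let h : B → A be a codense functor, and let i : A → A₀ be the inclusion of a reflective subcategory with reflector (left adjoint) F : A₀ → A. Assume the limits defining the codensity monads exist. Then for every object A of A₀ there is an isomorphism T^{i∘h}(A) ≅ i(F(A)), where T^{i∘h} denotes the underlying endofunctor of the codensity monad of i∘h; hence the codensity monad of i∘h is the idempotent monad given by the reflection, and its essential image is the subcategory A. -/

import Mathlib

open CategoryTheory

/-- `T` (a monad on `𝒜`), together with the projections `π`, is *the codensity monad* of
`G : ℬ ⥤ 𝒜`: for every object `a` of `𝒜`, `T.obj a` with the projections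
`π a b f : T.obj a ⟶ G.obj b` (indexed by morphisms `f : a ⟶ G.obj b`) is a limit cone
over the comma-category diagram `(b, f) ↦ G.obj b`, and the functorial action, the unit
and the multiplication of `T` satisfy `T(g) ≫ π_f = π_{g ≫ f}`, `η_a ≫ π_f = f` and
`μ_a ≫ π_f = π_{π_f}`. -/
def IsCodensityMonad {ℬ 𝒜 : Type*} [Category ℬ] [Category 𝒜] (G : ℬ ⥤ 𝒜) (T : Monad 𝒜)
    (π : ∀ (a : 𝒜) (b : ℬ), (a ⟶ G.obj b) → (T.obj a ⟶ G.obj b)) : Prop :=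
  -- the projections form a cone over the comma-category diagram
  (∀ (a : 𝒜) (b b' : ℬ) (f : a ⟶ G.obj b) (φ : b ⟶ b'),
      π a b f ≫ G.map φ = π a b' (f ≫ G.map φ)) ∧
  -- the cone is a limit cone
  (∀ (a m : 𝒜) (c : ∀ b : ℬ, (a ⟶ G.obj b) → (m ⟶ G.obj b)),
      (∀ (b b' : ℬ) (f : a ⟶ G.obj b) (φ : b ⟶ b'),
        c b f ≫ G.map φ = c b' (f ≫ G.map φ)) →
      ∃! l : m ⟶ T.obj a, ∀ (b : ℬ) (f : a ⟶ G.obj b), l ≫ π a b f = c b f) ∧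
  -- functoriality, unit and multiplication are the canonical ones
  (∀ (a a' : 𝒜) (g : a ⟶ a') (b : ℬ) (f : a' ⟶ G.obj b),
      T.map g ≫ π a' b f = π a b (g ≫ f)) ∧
  (∀ (a : 𝒜) (b : ℬ) (f : a ⟶ G.obj b), T.η.app a ≫ π a b f = f) ∧
  (∀ (a : 𝒜) (b : ℬ) (f : a ⟶ G.obj b), T.μ.app a ≫ π a b f = π (T.obj a) b (π a b f))

universe w

section Aux

variable {ℬ : Type*} {𝒜 : Type*} {𝒜₀ : Type*} [Category ℬ] [Category 𝒜] [Category 𝒜₀]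

/-- Key limit transfer: `i.obj (F.obj a)` with projections `i.map ((homEquiv).symm f)` is a
limit of the comma diagram of `h ⋙ i` at `a`. -/
lemma aux_limit (h : ℬ ⥤ 𝒜) (i : 𝒜 ⥤ 𝒜₀) (F : 𝒜₀ ⥤ 𝒜) (adj : F ⊣ i)
    (S : Monad 𝒜) (πS : ∀ (a : 𝒜) (b : ℬ), (a ⟶ h.obj b) → (S.obj a ⟶ h.obj b))
    (hS : IsCodensityMonad h S πS)
    (hcodense : ∀ a : 𝒜, IsIso (S.η.app a)) (a m : 𝒜₀)
    (c : ∀ b : ℬ, (a ⟶ (h ⋙ i).obj b) → (m ⟶ (h ⋙ i).obj b))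
    (hc : ∀ (b b' : ℬ) (f : a ⟶ (h ⋙ i).obj b) (φ : b ⟶ b'),
        c b f ≫ (h ⋙ i).map φ = c b' (f ≫ (h ⋙ i).map φ)) :
    ∃! l : m ⟶ i.obj (F.obj a), ∀ (b : ℬ) (f : a ⟶ (h ⋙ i).obj b),
      l ≫ i.map ((adj.homEquiv a (h.obj b)).symm f) = c b f := by
  set d : ∀ b : ℬ, (F.obj a ⟶ h.obj b) → (F.obj m ⟶ h.obj b) :=
    fun b g => (adj.homEquiv m (h.obj b)).symm (c b (adj.homEquiv a (h.obj b) g)) with hd_def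
  have hd : ∀ (b b' : ℬ) (g : F.obj a ⟶ h.obj b) (φ : b ⟶ b'),
      d b g ≫ h.map φ = d b' (g ≫ h.map φ) := by
    intro b b' g φ
    simp only [hd_def]
    rw [← Adjunction.homEquiv_naturality_right_symm]
    congr 1
    rw [Adjunction.homEquiv_naturality_right]
    exact hc b b' _ φ
  obtain ⟨l0, hl0, hl0u⟩ := hS.2.1 (F.obj a) (F.obj m) d hd
  haveI := hcodense (F.obj a)
  set k : F.obj m ⟶ F.obj a := l0 ≫ inv (S.η.app (F.obj a)) with hk_def
  have hk : ∀ (b : ℬ) (g : F.obj a ⟶ h.obj b), k ≫ g = d b g := by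
    intro b g
    have := hS.2.2.2.1 (F.obj a) b g
    calc k ≫ g = k ≫ S.η.app (F.obj a) ≫ πS (F.obj a) b g := by rw [this]
    _ = l0 ≫ πS (F.obj a) b g := by
        rw [hk_def]; simp
    _ = d b g := hl0 b g
  refine ⟨adj.homEquiv m (F.obj a) k, ?_, ?_⟩
  · intro b f
    rw [← Adjunction.homEquiv_naturality_right, hk b _, hd_def]
    simp
  · intro l' hl'
    have hk' : ∀ (b : ℬ) (g : F.obj a ⟶ h.obj b),
        (adj.homEquiv m (F.obj a)).symm l' ≫ g = d b g := by
      intro b g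
      apply (adj.homEquiv m (h.obj b)).injective
      rw [Adjunction.homEquiv_naturality_right, Equiv.apply_symm_apply, hd_def]
      simp only [Equiv.apply_symm_apply]
      have := hl' b (adj.homEquiv a (h.obj b) g)
      rw [Equiv.symm_apply_apply] at this
      rw [this]
    have heq : (adj.homEquiv m (F.obj a)).symm l' ≫ S.η.app (F.obj a) = l0 := by
      apply hl0u
      intro b g
      rw [Category.assoc, hS.2.2.2.1 (F.obj a) b g]
      exact hk' b g
    have hkk : (adj.homEquiv m (F.obj a)).symm l' = k := by
      rw [hk_def, ← heq]; simp
    rw [← Equiv.apply_symm_apply (adj.homEquiv m (F.obj a)) l', hkk]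

end Aux

/-- Let `h : ℬ ⥤ 𝒜` be a codense functor (`ℬ` essentially small), and let
`i : 𝒜 ⥤ 𝒜₀` be the inclusion of a reflective subcategory, with reflector `F ⊣ i`.  Assume
the codensity monads of `h` and of `i ⋙ h` exist (given here as `S` and `T` with their
limit projections; codensity of `h` means the unit of its codensity monad is an
isomorphism).  Then `T(a) ≅ i(F(a))` for every object `a` of `𝒜₀`; hence the codensity
monad `T` of `i ∘ h` is isomorphic (as a monad) to the idempotent monad given by the
reflection, and its essential image is the subcategory `𝒜`. -/
theorem codensityMonad_of_codense_into_reflective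
    {ℬ : Type*} {𝒜 : Type*} {𝒜₀ : Type*} [Category ℬ] [Category 𝒜] [Category 𝒜₀]
    [EssentiallySmall.{w} ℬ]
    (h : ℬ ⥤ 𝒜) (i : 𝒜 ⥤ 𝒜₀) [i.Full] [i.Faithful] (F : 𝒜₀ ⥤ 𝒜) (adj : F ⊣ i)
    (S : Monad 𝒜) (πS : ∀ (a : 𝒜) (b : ℬ), (a ⟶ h.obj b) → (S.obj a ⟶ h.obj b))
    (hS : IsCodensityMonad h S πS)
    (hcodense : ∀ a : 𝒜, IsIso (S.η.app a))
    (T : Monad 𝒜₀) (πT : ∀ (a : 𝒜₀) (b : ℬ), (a ⟶ (h ⋙ i).obj b) → (T.obj a ⟶ (h ⋙ i).obj b))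
    (hT : IsCodensityMonad (h ⋙ i) T πT) :
    (∀ a : 𝒜₀, Nonempty (T.obj a ≅ i.obj (F.obj a))) ∧
    Nonempty (T ≅ adj.toMonad) ∧
    (∀ x : 𝒜₀, T.toFunctor.essImage x ↔ i.essImage x) := by
  -- The canonical projections out of `i.obj (F.obj x)` form a cone:
  have hPcone : ∀ (x : 𝒜₀) (b b' : ℬ) (f : x ⟶ (h ⋙ i).obj b) (φ : b ⟶ b'),
      i.map ((adj.homEquiv x (h.obj b)).symm f) ≫ (h ⋙ i).map φ =
        i.map ((adj.homEquiv x (h.obj b')).symm (f ≫ (h ⋙ i).map φ)) := by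
    intro x b b' f φ
    simp only [Functor.comp_map]
    rw [Adjunction.homEquiv_naturality_right_symm, i.map_comp]
  -- extensionality for maps into `i.obj (F.obj x)`
  have hext : ∀ (x m : 𝒜₀) (u v : m ⟶ i.obj (F.obj x)),
      (∀ (b : ℬ) (f : x ⟶ (h ⋙ i).obj b),
        u ≫ i.map ((adj.homEquiv x (h.obj b)).symm f) =
        v ≫ i.map ((adj.homEquiv x (h.obj b)).symm f)) → u = v := by
    intro x m u v huv
    obtain ⟨l, -, hu⟩ := aux_limit h i F adj S πS hS hcodense x m
      (fun b f => u ≫ i.map ((adj.homEquiv x (h.obj b)).symm f))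
      (fun b b' f φ => by rw [Category.assoc, hPcone x b b' f φ])
    rw [hu u (fun b f => rfl), hu v (fun b f => (huv b f).symm)]
  -- extensionality for maps into `T.obj x`
  have hText : ∀ (x m : 𝒜₀) (u v : m ⟶ T.obj x),
      (∀ (b : ℬ) (f : x ⟶ (h ⋙ i).obj b), u ≫ πT x b f = v ≫ πT x b f) → u = v := by
    intro x m u v huv
    obtain ⟨l, -, hu⟩ := hT.2.1 x m (fun b f => u ≫ πT x b f)
      (fun b b' f φ => by rw [Category.assoc, hT.1 x b b' f φ])
    rw [hu u (fun b f => rfl), hu v (fun b f => (huv b f).symm)]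
  -- the comparison morphisms
  have hθ : ∀ x : 𝒜₀, ∃ θ : T.obj x ⟶ i.obj (F.obj x),
      ∀ (b : ℬ) (f : x ⟶ (h ⋙ i).obj b),
        θ ≫ i.map ((adj.homEquiv x (h.obj b)).symm f) = πT x b f := by
    intro x
    obtain ⟨l, hl, -⟩ := aux_limit h i F adj S πS hS hcodense x (T.obj x) (πT x) (hT.1 x)
    exact ⟨l, hl⟩
  choose θ hθ using hθ
  have hψ : ∀ x : 𝒜₀, ∃ ψ : i.obj (F.obj x) ⟶ T.obj x,
      ∀ (b : ℬ) (f : x ⟶ (h ⋙ i).obj b),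
        ψ ≫ πT x b f = i.map ((adj.homEquiv x (h.obj b)).symm f) := by
    intro x
    obtain ⟨l, hl, -⟩ := hT.2.1 x (i.obj (F.obj x))
      (fun b f => i.map ((adj.homEquiv x (h.obj b)).symm f)) (hPcone x)
    exact ⟨l, hl⟩
  choose ψ hψ using hψ
  have hθψ : ∀ x : 𝒜₀, θ x ≫ ψ x = 𝟙 (T.obj x) := by
    intro x
    apply hText x _ _ _
    intro b f
    rw [Category.assoc, hψ x b f, hθ x b f, Category.id_comp]
  have hψθ : ∀ x : 𝒜₀, ψ x ≫ θ x = 𝟙 (i.obj (F.obj x)) := by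
    intro x
    apply hext x _ _ _
    intro b f
    rw [Category.assoc, hθ x b f, hψ x b f, Category.id_comp]
  -- naturality of θ
  have hnat : ∀ (x y : 𝒜₀) (g : x ⟶ y),
      T.map g ≫ θ y = θ x ≫ (F ⋙ i).map g := by
    intro x y g
    apply hext y _ _ _
    intro b f
    rw [Category.assoc, hθ y b f, hT.2.2.1 x y g b f, Category.assoc]
    have : (F ⋙ i).map g ≫ i.map ((adj.homEquiv y (h.obj b)).symm f) =
        i.map ((adj.homEquiv x (h.obj b)).symm (g ≫ f)) := by
      simp only [Functor.comp_map, ← i.map_comp,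
        Adjunction.homEquiv_naturality_left_symm]
    rw [this, hθ x b (g ≫ f)]
  -- the natural isomorphism
  let θiso : T.toFunctor ≅ (F ⋙ i) := NatIso.ofComponents
    (fun x => ⟨θ x, ψ x, hθψ x, hψθ x⟩) (fun g => hnat _ _ g)
  have hθiso_app : ∀ x : 𝒜₀, θiso.hom.app x = θ x := fun x => rfl
  refine ⟨fun a => ⟨θiso.app a⟩, ⟨MonadIso.mk θiso ?_ ?_⟩, ?_⟩
  · -- unit
    intro x
    show T.η.app x ≫ θiso.hom.app x = adj.unit.app x
    rw [hθiso_app]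
    apply hext x _ _ _
    intro b f
    rw [Category.assoc, hθ x b f, hT.2.2.2.1 x b f]
    exact ((adj.homEquiv x (h.obj b)).apply_symm_apply f).symm.trans
      (adj.homEquiv_unit x (h.obj b) _)
  · -- multiplication
    intro x
    show T.μ.app x ≫ θiso.hom.app x =
      (T.map (θiso.hom.app x) ≫ θiso.hom.app (i.obj (F.obj x))) ≫
        i.map (adj.counit.app (F.obj x))
    rw [hθiso_app, hθiso_app]
    apply hext x _ _ _
    intro b f
    rw [Category.assoc, hθ x b f, hT.2.2.2.2 x b f]
    have key : i.map (adj.counit.app (F.obj x)) ≫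
        i.map ((adj.homEquiv x (h.obj b)).symm f) =
        i.map ((adj.homEquiv (i.obj (F.obj x)) (h.obj b)).symm
          (i.map ((adj.homEquiv x (h.obj b)).symm f))) := by
      rw [← i.map_comp]
      congr 1
      rw [Adjunction.homEquiv_counit]
      exact (adj.counit.naturality ((adj.homEquiv x (h.obj b)).symm f)).symm
    rw [Category.assoc, Category.assoc, key,
      hθ (i.obj (F.obj x)) b (i.map ((adj.homEquiv x (h.obj b)).symm f)),
      hT.2.2.1 (T.obj x) (i.obj (F.obj x)) (θ x) b
        (i.map ((adj.homEquiv x (h.obj b)).symm f)),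
      hθ x b f]
  · -- essential image
    intro x
    constructor
    · rintro ⟨y, ⟨e⟩⟩
      exact ⟨F.obj y, ⟨(θiso.app y).symm ≪≫ e⟩⟩
    · rintro ⟨y, ⟨e⟩⟩
      haveI : IsIso adj.counit := adj.counit_isIso_of_R_fully_faithful
      refine ⟨x, ⟨θiso.app x ≪≫ ?_⟩⟩
      exact i.mapIso ((F.mapIso e.symm) ≪≫ asIso (adj.counit.app y)) ≪≫ e
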